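/- arXiv:2507.20495 — 2 statements merged into one kernel-verified Lean document; each statement's English description precedes it below -/
import Mathlib

section
/- The number of parking functions π ∈ PF(m,n) with π_1 ∈ {1,2,...,n-m+1} is (n-m+1)(n-m+2)(n+1)^{m-2}, for m ≥ 2. -/
/-- `π : [m] → [n]` is a parking function in `PF(m,n)`. -/
def IsPF (m n : ℕ) (π : Fin m → ℕ) : Prop :=
  (∀ k, 1 ≤ π k ∧ π k ≤ n) ∧
  ∀ i, i ≤ n → m + i ≤ (Finset.univ.filter (fun k => π k ≤ i)).card + n

lemma records (S : ℕ → ℤ) (h0 : S 0 = 0) (hstep : ∀ t, S (t+1) ≤ S t + 1) (T : ℕ) :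
    ((((Finset.range (T+1)).filter (fun t => ∀ v < t, S v < S t)).card : ℤ))
      = (Finset.range (T+1)).sup' Finset.nonempty_range_add_one S + 1 := by
  induction T with
  | zero =>
      rw [Finset.filter_true_of_mem (by intro x hx; simp at hx; omega)]
      simp [h0]
  | succ T ih =>
      have hsplit : Finset.range (T+1+1) = insert (T+1) (Finset.range (T+1)) :=
        Finset.range_add_one
      have hnotmem : (T+1) ∉ Finset.range (T+1) := by simp
      set M := (Finset.range (T+1)).sup' Finset.nonempty_range_add_one S with hM
      have hMT : S T ≤ M := Finset.le_sup' S (by simp : T ∈ Finset.range (T+1))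
      have hsup : (Finset.range (T+1+1)).sup' Finset.nonempty_range_add_one S
          = S (T+1) ⊔ M := by
        apply le_antisymm
        · apply Finset.sup'_le
          intro v hv
          have hv' : v < T + 1 ∨ v = T + 1 := by have := Finset.mem_range.1 hv; omega
          rcases hv' with h | h
          · exact le_trans (Finset.le_sup' S (Finset.mem_range.2 h)) le_sup_right
          · rw [h]; exact le_sup_left
        · apply max_le
          · exact Finset.le_sup' S (by simp)
          · apply Finset.sup'_le
            intro v hv
            exact Finset.le_sup' S (by simp at hv ⊢; omega)
      by_cases hP : ∀ v < T+1, S v < S (T+1)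
      · have hlt : M < S (T+1) := by
          rw [hM]
          exact (Finset.sup'_lt_iff Finset.nonempty_range_add_one).2
            (fun v hv => hP v (Finset.mem_range.1 hv))
        have heq : S (T+1) = M + 1 := le_antisymm (le_trans (hstep T) (by omega)) (by omega)
        have hcard : ((Finset.range (T+1+1)).filter (fun t => ∀ v < t, S v < S t)).card
            = ((Finset.range (T+1)).filter (fun t => ∀ v < t, S v < S t)).card + 1 := by
          rw [hsplit, Finset.filter_insert, if_pos hP, Finset.card_insert_of_notMem
            (fun h => hnotmem (Finset.mem_of_mem_filter _ h))]
        rw [hcard, hsup]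
        push_cast
        omega
      · have hle : S (T+1) ≤ M := by
          by_contra h
          exact hP fun v hv => lt_of_le_of_lt (Finset.le_sup' S (Finset.mem_range.2 hv)) (by omega)
        have hcard : ((Finset.range (T+1+1)).filter (fun t => ∀ v < t, S v < S t)).card
            = ((Finset.range (T+1)).filter (fun t => ∀ v < t, S v < S t)).card := by
          rw [hsplit, Finset.filter_insert, if_neg hP]
        rw [hcard, hsup]
        omega

lemma good_count (S : ℕ → ℤ) (N D : ℕ) (h0 : S 0 = 0) (hstep : ∀ t, S (t+1) ≤ S t + 1)
    (hper : ∀ t, S (t + N) = S t + D) :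
    ((Finset.Ico (N+1) (2*N+1)).filter (fun t => ∀ v < t, t ≤ v + N → S v < S t)).card = D := by
  have hDnn : (0:ℤ) ≤ (D:ℤ) := Int.natCast_nonneg D
  -- good = record on the interval
  have hcongr : (Finset.Ico (N+1) (2*N+1)).filter (fun t => ∀ v < t, t ≤ v + N → S v < S t)
      = (Finset.Ico (N+1) (2*N+1)).filter (fun t => ∀ v < t, S v < S t) := by
    apply Finset.filter_congr
    intro t ht
    have ht' := Finset.mem_Ico.1 ht
    constructor
    · intro hgood v hv
      by_cases hc : t ≤ v + N
      · exact hgood v hv hc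
      · have h1 : S (v + N) < S t := hgood (v+N) (by omega) (by omega)
        have h2 := hper v
        omega
    · intro hrec v hv _
      exact hrec v hv
  rw [hcongr]
  -- split range (2N+1)
  have hsplit : Finset.range (2*N+1) = Finset.range (N+1) ∪ Finset.Ico (N+1) (2*N+1) := by
    rw [Finset.range_eq_Ico, Finset.range_eq_Ico, Finset.Ico_union_Ico_eq_Ico (by omega) (by omega)]
  have hdisj : Disjoint (Finset.range (N+1)) (Finset.Ico (N+1) (2*N+1)) := by
    rw [Finset.disjoint_left]
    intro a ha hb
    simp at ha
    have := Finset.mem_Ico.1 hb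
    omega
  have hcards : ((Finset.range (2*N+1)).filter (fun t => ∀ v < t, S v < S t)).card
      = ((Finset.range (N+1)).filter (fun t => ∀ v < t, S v < S t)).card
        + ((Finset.Ico (N+1) (2*N+1)).filter (fun t => ∀ v < t, S v < S t)).card := by
    rw [hsplit, Finset.filter_union, Finset.card_union_of_disjoint
      (Finset.disjoint_filter_filter hdisj)]
  have h2N : 2*N+1 = (2*N)+1 := rfl
  have hrec1 := records S h0 hstep (2*N)
  have hrec2 := records S h0 hstep N
  -- sup over range(2N+1) = sup over range(N+1) + D
  set M1 := (Finset.range (N+1)).sup' Finset.nonempty_range_add_one S with hM1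
  set M2 := (Finset.range (2*N+1)).sup' Finset.nonempty_range_add_one S with hM2
  have hMle : ∀ v ∈ Finset.range (N+1), S v ≤ M1 := fun v hv => Finset.le_sup' S hv
  have hsupeq : M2 = M1 + D := by
    apply le_antisymm
    · apply Finset.sup'_le
      intro v hv
      have hv' : v < 2*N+1 := Finset.mem_range.1 hv
      by_cases hc : v ≤ N
      · have := hMle v (Finset.mem_range.2 (by omega))
        omega
      · obtain ⟨u, rfl⟩ : ∃ u, v = u + N := ⟨v - N, by omega⟩
        have := hMle u (Finset.mem_range.2 (by omega))
        have := hper u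
        omega
    · obtain ⟨t, ht, hteq⟩ := Finset.exists_mem_eq_sup' (Finset.nonempty_range_add_one) S
        (s := Finset.range (N+1))
      have h1 : S (t + N) = S t + D := hper t
      have h2 : S (t + N) ≤ M2 :=
        Finset.le_sup' S (Finset.mem_range.2 (by have := Finset.mem_range.1 ht; omega))
      omega
  have : ((Finset.Ico (N+1) (2*N+1)).filter (fun t => ∀ v < t, S v < S t)).card
      = ((Finset.range (2*N+1)).filter (fun t => ∀ v < t, S v < S t)).card
        - ((Finset.range (N+1)).filter (fun t => ∀ v < t, S v < S t)).card := by omega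
  rw [this]
  have h2N' : (2*N)+1 = 2*N+1 := rfl
  omega

def cnt (n p : ℕ) (f : Fin p → ZMod (n+1)) (j : ℕ) : ℕ :=
  (Finset.univ.filter fun k => f k = (j : ZMod (n+1))).card

def SS (n p : ℕ) (f : Fin p → ZMod (n+1)) (t : ℕ) : ℤ :=
  t - ∑ j ∈ Finset.range t, (cnt n p f j : ℤ)

def cntlt (n p : ℕ) (f : Fin p → ZMod (n+1)) (c t : ℕ) : ℕ :=
  (Finset.univ.filter fun k => ((c : ZMod (n+1)) - f k).val < t).card

def shiftf (n p : ℕ) (f : Fin p → ZMod (n+1)) (c : ℕ) : Fin p → ℕ :=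
  fun k => (n+1) - ((c : ZMod (n+1)) - f k).val

lemma sum_cnt (n p : ℕ) (f : Fin p → ZMod (n+1)) :
    ∑ j ∈ Finset.range (n+1), cnt n p f j = p := by
  have h := Finset.card_eq_sum_card_fiberwise
    (f := fun k : Fin p => (f k).val) (s := Finset.univ) (t := Finset.range (n+1))
    (fun k _ => Finset.mem_range.2 (ZMod.val_lt (f k)))
  rw [Finset.card_univ, Fintype.card_fin] at h
  refine Eq.trans (Finset.sum_congr rfl ?_) h.symm
  intro j hj
  unfold cnt
  congr 1
  apply Finset.filter_congr
  intro k _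
  constructor
  · intro hfk
    rw [hfk]
    exact ZMod.val_cast_of_lt (Finset.mem_range.1 hj)
  · rintro rfl
    exact (ZMod.natCast_rightInverse (f k)).symm

lemma SS_zero (n p : ℕ) (f : Fin p → ZMod (n+1)) : SS n p f 0 = 0 := by simp [SS]

lemma SS_succ (n p : ℕ) (f : Fin p → ZMod (n+1)) (t : ℕ) :
    SS n p f (t+1) = SS n p f t + 1 - cnt n p f t := by
  simp [SS, Finset.sum_range_succ]; ring

lemma SS_step (n p : ℕ) (f : Fin p → ZMod (n+1)) (t : ℕ) :
    SS n p f (t+1) ≤ SS n p f t + 1 := by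
  rw [SS_succ]; have : (0:ℤ) ≤ cnt n p f t := Int.natCast_nonneg _; omega

lemma cnt_add (n p : ℕ) (f : Fin p → ZMod (n+1)) (j : ℕ) :
    cnt n p f (j + (n+1)) = cnt n p f j := by
  unfold cnt
  congr 1
  apply Finset.filter_congr
  intro k _
  have : ((j + (n+1) : ℕ) : ZMod (n+1)) = (j : ZMod (n+1)) := by
    push_cast
    simp
  rw [this]

lemma SS_per (n p : ℕ) (hp : p ≤ n+1) (f : Fin p → ZMod (n+1)) (t : ℕ) :
    SS n p f (t + (n+1)) = SS n p f t + ((n+1-p : ℕ) : ℤ) := by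
  induction t with
  | zero =>
      have h1 : SS n p f (n+1) = (n+1) - p := by
        unfold SS
        have : ∑ j ∈ Finset.range (n+1), ((cnt n p f j : ℤ)) = ((p : ℕ) : ℤ) := by
          rw [← Nat.cast_sum]
          exact_mod_cast congrArg (Nat.cast : ℕ → ℤ) (sum_cnt n p f)
        rw [this]
        push_cast
        ring
      have h2 : ((n+1-p : ℕ) : ℤ) = (n+1 : ℤ) - p := by omega
      rw [SS_zero, h2]
      simpa using h1
  | succ t ih =>
      have h1 : t + 1 + (n+1) = (t + (n+1)) + 1 := by omega
      rw [h1, SS_succ, ih, cnt_add, SS_succ]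
      ring

lemma cntlt_zero (n p : ℕ) (f : Fin p → ZMod (n+1)) (c : ℕ) : cntlt n p f c 0 = 0 := by
  simp [cntlt]

lemma cntlt_succ (n p : ℕ) (f : Fin p → ZMod (n+1)) (c t : ℕ) (ht : t < n+1) :
    cntlt n p f c (t+1) = cntlt n p f c t + cnt n p f (c + (n+1) - t) := by
  unfold cntlt cnt
  have hsplit : (Finset.univ.filter fun k => ((c : ZMod (n+1)) - f k).val < t+1)
      = (Finset.univ.filter fun k => ((c : ZMod (n+1)) - f k).val < t)
        ∪ (Finset.univ.filter fun k => ((c : ZMod (n+1)) - f k).val = t) := by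
    rw [← Finset.filter_or]
    apply Finset.filter_congr
    intro k _
    constructor
    · intro h; omega
    · intro h; omega
  rw [hsplit, Finset.card_union_of_disjoint]
  · congr 1
    congr 1
    apply Finset.filter_congr
    intro k _
    have hcast : ((c + (n+1) - t : ℕ) : ZMod (n+1)) = (c : ZMod (n+1)) - (t : ℕ) := by
      have h1 : (c + (n+1) - t : ℕ) = c + ((n+1) - t) := by omega
      rw [h1]
      push_cast [Nat.cast_sub (le_of_lt ht)]
      simp
      ring
    constructor
    · intro h
      have h2 : ((c : ZMod (n+1)) - f k) = ((t : ℕ) : ZMod (n+1)) := by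
        rw [← h]
        exact (ZMod.natCast_rightInverse _).symm
      rw [hcast]
      have : f k = (c : ZMod (n+1)) - ((t : ℕ) : ZMod (n+1)) := by
        rw [← h2]; ring
      rw [this]
    · intro h
      rw [h, hcast]
      have : (c : ZMod (n+1)) - ((c : ZMod (n+1)) - (t:ℕ)) = ((t:ℕ) : ZMod (n+1)) := by ring
      rw [this]
      exact ZMod.val_cast_of_lt ht
  · rw [Finset.disjoint_left]
    intro k hk hk'
    simp at hk hk'
    omega

lemma cntlt_SS (n p : ℕ) (f : Fin p → ZMod (n+1)) (c : ℕ) :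
    ∀ t, t ≤ n+1 → (cntlt n p f c t : ℤ)
      = t - SS n p f (c+(n+1)+1) + SS n p f (c+(n+1)+1-t) := by
  intro t
  induction t with
  | zero => intro _; simp [cntlt_zero]
  | succ t ih =>
      intro ht
      have ht' : t < n+1 := by omega
      have h1 := cntlt_succ n p f c t ht'
      have h2 := ih (by omega)
      have hv : c+(n+1)+1-(t+1) = c + (n+1) - t := by omega
      set v := c + (n+1) - t with hvdef
      have hs := SS_succ n p f v
      have h1' : (cntlt n p f c (t+1) : ℤ) = cntlt n p f c t + cnt n p f v := by
        exact_mod_cast h1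
      have e1 : c+(n+1)+1-t = v + 1 := by omega
      rw [e1] at h2
      rw [hv]
      push_cast
      linarith [h2, hs, h1']


instance (m n : ℕ) (π : Fin m → ℕ) : Decidable (IsPF m n π) := by
  unfold IsPF; infer_instance

lemma part_shiftf (n p : ℕ) (f : Fin p → ZMod (n+1)) (c i : ℕ) (hi : i ≤ n) :
    (Finset.univ.filter fun k => shiftf n p f c k ≤ i).card
      + cntlt n p f c (n+1-i) = p := by
  have h : (Finset.univ.filter fun k => shiftf n p f c k ≤ i)
      = (Finset.univ.filter fun k => ¬ (((c : ZMod (n+1)) - f k).val < n+1-i)) := by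
    apply Finset.filter_congr
    intro k _
    have hval : ((c : ZMod (n+1)) - f k).val < n+1 := ZMod.val_lt _
    unfold shiftf
    omega
  rw [h]
  unfold cntlt
  rw [add_comm]
  rw [Finset.card_filter_add_card_filter_not]
  simp

lemma isPF_shiftf_iff (n p : ℕ) (f : Fin p → ZMod (n+1)) (c : ℕ) :
    IsPF p n (shiftf n p f c) ↔ ∀ t, 1 ≤ t → t ≤ n+1 → cntlt n p f c t + 1 ≤ t := by
  constructor
  · rintro ⟨hb, hcond⟩ t h1 ht
    have hi : n+1-t ≤ n := by omega
    have hpart := part_shiftf n p f c (n+1-t) hi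
    have hc := hcond (n+1-t) hi
    have he : n+1-(n+1-t) = t := by omega
    rw [he] at hpart
    omega
  · intro h
    constructor
    · intro k
      have hval : ((c : ZMod (n+1)) - f k).val < n+1 := ZMod.val_lt _
      have h1 := h 1 (by omega) (by omega)
      have hz : ((c : ZMod (n+1)) - f k).val ≠ 0 := by
        intro hz
        have hmem : k ∈ Finset.univ.filter fun k => ((c : ZMod (n+1)) - f k).val < 1 := by
          simp only [Finset.mem_filter, Finset.mem_univ, true_and]
          omega
        have hcard : 0 < cntlt n p f c 1 := Finset.card_pos.2 ⟨k, hmem⟩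
        omega
      unfold shiftf
      omega
    · intro i hi
      have hpart := part_shiftf n p f c i hi
      have ht := h (n+1-i) (by omega) (by omega)
      omega

lemma good_iff (n p : ℕ) (f : Fin p → ZMod (n+1)) (c : ℕ) :
    (∀ t, 1 ≤ t → t ≤ n+1 → cntlt n p f c t + 1 ≤ t)
      ↔ (∀ v < c+(n+1)+1, c+(n+1)+1 ≤ v + (n+1) → SS n p f v < SS n p f (c+(n+1)+1)) := by
  constructor
  · intro h v hv hle
    set t := c+(n+1)+1-v with htdef
    have h1 : 1 ≤ t := by omega
    have ht : t ≤ n+1 := by omega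
    have hS := cntlt_SS n p f c t ht
    have he : c+(n+1)+1-t = v := by omega
    rw [he] at hS
    have := h t h1 ht
    have hcast : (cntlt n p f c t : ℤ) + 1 ≤ (t:ℤ) := by exact_mod_cast this
    linarith [hS, hcast]
  · intro h t h1 ht
    set v := c+(n+1)+1-t with hvdef
    have hS := cntlt_SS n p f c t ht
    have hlt := h v (by omega) (by omega)
    rw [← hvdef] at hS
    have : (cntlt n p f c t : ℤ) + 1 ≤ (t:ℤ) := by linarith [hS, hlt]
    exact_mod_cast this

lemma count_good (n p : ℕ) (hp : p ≤ n+1) (f : Fin p → ZMod (n+1)) :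
    ((Finset.range (n+1)).filter fun c => IsPF p n (shiftf n p f c)).card = n+1-p := by
  have key := good_count (SS n p f) (n+1) (n+1-p) (SS_zero n p f) (SS_step n p f)
    (SS_per n p hp f)
  rw [← key]
  apply Finset.card_bij (fun c _ => c + (n+1) + 1)
  · intro c hc
    rw [Finset.mem_filter] at hc ⊢
    obtain ⟨hc1, hc2⟩ := hc
    have hc1' := Finset.mem_range.1 hc1
    constructor
    · rw [Finset.mem_Ico]; omega
    · intro v hv hle
      exact ((good_iff n p f c).1 ((isPF_shiftf_iff n p f c).1 hc2)) v hv hle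
  · intro a _ b _ hab
    omega
  · intro t ht
    rw [Finset.mem_filter, Finset.mem_Ico] at ht
    obtain ⟨⟨ht1, ht2⟩, hgood⟩ := ht
    refine ⟨t - (n+1) - 1, ?_, by omega⟩
    rw [Finset.mem_filter, Finset.mem_range]
    constructor
    · omega
    · rw [isPF_shiftf_iff, good_iff]
      have he : t - (n+1) - 1 + (n+1) + 1 = t := by omega
      rw [he]
      exact hgood

lemma shiftf_inv (n p : ℕ) (π : Fin p → ℕ) (c : ℕ) (hb : ∀ k, 1 ≤ π k ∧ π k ≤ n) :
    shiftf n p (fun k => (π k : ZMod (n+1)) + (c : ZMod (n+1))) c = π := by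
  funext k
  obtain ⟨h1, h2⟩ := hb k
  unfold shiftf
  have he : (c : ZMod (n+1)) - ((π k : ZMod (n+1)) + (c : ZMod (n+1)))
      = ((n+1-π k : ℕ) : ZMod (n+1)) := by
    push_cast [Nat.cast_sub (show π k ≤ n+1 by omega)]
    simp
  rw [he, ZMod.val_cast_of_lt (show n+1-π k < n+1 by omega)]
  omega

lemma ncard_PF_eq_filter (n p c : ℕ) :
    {π : Fin p → ℕ | IsPF p n π}.ncard
      = (Finset.univ.filter fun f : Fin p → ZMod (n+1) => IsPF p n (shiftf n p f c)).card := by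
  have hinj : Set.InjOn (fun f => shiftf n p f c)
      {f : Fin p → ZMod (n+1) | IsPF p n (shiftf n p f c)} := by
    intro f hf g hg hfg
    funext k
    have h1 : ((c : ZMod (n+1)) - f k).val < n+1 := ZMod.val_lt _
    have h2 : ((c : ZMod (n+1)) - g k).val < n+1 := ZMod.val_lt _
    have h3 : shiftf n p f c k = shiftf n p g c k := congrFun hfg k
    unfold shiftf at h3
    have h4 : ((c : ZMod (n+1)) - f k).val = ((c : ZMod (n+1)) - g k).val := by omega
    have h5 : (c : ZMod (n+1)) - f k = (c : ZMod (n+1)) - g k := ZMod.val_injective _ h4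
    have h6 : f k = g k := by
      have := congrArg (fun x => (c : ZMod (n+1)) - x) h5
      simpa using this
    exact h6
  have himg : (fun f => shiftf n p f c) '' {f : Fin p → ZMod (n+1) | IsPF p n (shiftf n p f c)}
      = {π : Fin p → ℕ | IsPF p n π} := by
    apply Set.Subset.antisymm
    · rintro π ⟨f, hf, rfl⟩
      exact hf
    · intro π hπ
      refine ⟨fun k => (π k : ZMod (n+1)) + (c : ZMod (n+1)), ?_, ?_⟩
      · simp only [Set.mem_setOf_eq]
        rw [shiftf_inv n p π c hπ.1]
        exact hπ
      · show shiftf n p (fun k => (π k : ZMod (n+1)) + (c : ZMod (n+1))) c = π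
        exact shiftf_inv n p π c hπ.1
  rw [← himg, Set.ncard_image_of_injOn hinj]
  have hset : {f : Fin p → ZMod (n+1) | IsPF p n (shiftf n p f c)}
      = ↑(Finset.univ.filter fun f : Fin p → ZMod (n+1) => IsPF p n (shiftf n p f c)) := by
    ext f; simp
  rw [hset, Set.ncard_coe_finset]

lemma ncard_PF (p n : ℕ) (hp1 : 1 ≤ p) (hpn : p ≤ n) :
    {π : Fin p → ℕ | IsPF p n π}.ncard = (n+1-p) * (n+1)^(p-1) := by
  have hcomm : ∑ c ∈ Finset.range (n+1),
        (Finset.univ.filter fun f : Fin p → ZMod (n+1) => IsPF p n (shiftf n p f c)).card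
      = ∑ f : Fin p → ZMod (n+1),
        ((Finset.range (n+1)).filter fun c => IsPF p n (shiftf n p f c)).card := by
    simp only [Finset.card_filter]
    rw [Finset.sum_comm]
  have hL : ∑ c ∈ Finset.range (n+1),
        (Finset.univ.filter fun f : Fin p → ZMod (n+1) => IsPF p n (shiftf n p f c)).card
      = (n+1) * {π : Fin p → ℕ | IsPF p n π}.ncard := by
    rw [Finset.sum_congr rfl (fun c _ => (ncard_PF_eq_filter n p c).symm)]
    rw [Finset.sum_const, Finset.card_range, smul_eq_mul]
  have hR : ∑ f : Fin p → ZMod (n+1),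
        ((Finset.range (n+1)).filter fun c => IsPF p n (shiftf n p f c)).card
      = (n+1)^p * (n+1-p) := by
    rw [Finset.sum_congr rfl (fun f _ => count_good n p (by omega) f)]
    rw [Finset.sum_const, smul_eq_mul, Finset.card_univ]
    congr 1
    rw [Fintype.card_fun, ZMod.card, Fintype.card_fin]
  have hkey : (n+1) * {π : Fin p → ℕ | IsPF p n π}.ncard
      = (n+1) * ((n+1-p) * (n+1)^(p-1)) := by
    rw [← hL, hcomm, hR]
    have hp' : (n+1)^p = (n+1)^(p-1) * (n+1) := by
      rw [← pow_succ]
      congr 1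
      omega
    rw [hp']
    ring
  exact Nat.eq_of_mul_eq_mul_left (by omega) hkey

lemma card_filter_succ (m' n i : ℕ) (π : Fin (m'+1) → ℕ) :
    (Finset.univ.filter fun k : Fin (m'+1) => π k ≤ i).card
      = (Finset.univ.filter fun k : Fin m' => π k.succ ≤ i).card
        + (if π 0 ≤ i then 1 else 0) := by
  rw [Finset.card_filter, Finset.card_filter, Fin.sum_univ_succ, add_comm]

lemma isPF_succ (m' n : ℕ) (hmn : m'+1 ≤ n) (π : Fin (m'+1) → ℕ) (h0 : π 0 ≤ n - m') :
    IsPF (m'+1) n π ↔ (1 ≤ π 0 ∧ IsPF m' n (fun k => π k.succ)) := by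
  constructor
  · rintro ⟨hb, hcond⟩
    refine ⟨(hb 0).1, fun k => hb k.succ, ?_⟩
    intro i hi
    have hc := hcond i hi
    have hcard := card_filter_succ m' n i π
    beta_reduce
    split_ifs at hcard <;> omega
  · rintro ⟨h1, hb', hcond'⟩
    constructor
    · intro k
      induction k using Fin.cases with
      | zero => exact ⟨h1, by omega⟩
      | succ j => exact hb' j
    · intro i hi
      have hcard := card_filter_succ m' n i π
      by_cases hle : π 0 ≤ i
      · rw [if_pos hle] at hcard
        have hc := hcond' i hi
        beta_reduce at hc
        omega
      · rw [if_neg hle] at hcard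
        have : i < n - m' := by omega
        omega

theorem card_PF_first_le (m n : ℕ) (hm : 2 ≤ m) (hmn : m ≤ n) :
    {π : Fin m → ℕ | IsPF m n π ∧ π ⟨0, by omega⟩ ≤ n - m + 1}.ncard =
      (n - m + 1) * (n - m + 2) * (n + 1) ^ (m - 2) := by
  obtain ⟨m', rfl⟩ : ∃ m', m = m' + 1 := ⟨m - 1, by omega⟩
  have hm' : 1 ≤ m' := by omega
  have he0 : n - (m'+1) + 1 = n - m' := by omega
  have hS : {π : Fin (m'+1) → ℕ | IsPF (m'+1) n π ∧ π ⟨0, by omega⟩ ≤ n - (m'+1) + 1}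
      = {π : Fin (m'+1) → ℕ | (1 ≤ π 0 ∧ π 0 ≤ n - m') ∧ IsPF m' n (fun k => π k.succ)} := by
    ext π
    simp only [Set.mem_setOf_eq]
    have hz : (⟨0, by omega⟩ : Fin (m'+1)) = 0 := rfl
    rw [hz, he0]
    constructor
    · rintro ⟨hpf, hle⟩
      obtain ⟨h1, h2⟩ := (isPF_succ m' n hmn π hle).1 hpf
      exact ⟨⟨h1, hle⟩, h2⟩
    · rintro ⟨⟨h1, hle⟩, hpf⟩
      exact ⟨(isPF_succ m' n hmn π hle).2 ⟨h1, hpf⟩, hle⟩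
  rw [hS]
  have himg : (fun π : Fin (m'+1) → ℕ => (π 0, fun k : Fin m' => π k.succ))
        '' {π : Fin (m'+1) → ℕ | (1 ≤ π 0 ∧ π 0 ≤ n - m') ∧ IsPF m' n (fun k => π k.succ)}
      = (Set.Icc 1 (n - m')) ×ˢ {σ : Fin m' → ℕ | IsPF m' n σ} := by
    apply Set.Subset.antisymm
    · rintro q ⟨π, ⟨⟨h1, h2⟩, h3⟩, rfl⟩
      exact ⟨Set.mem_Icc.2 ⟨h1, h2⟩, h3⟩
    · rintro ⟨a, σ⟩ ⟨ha, hσ⟩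
      refine ⟨Fin.cons a σ, ⟨⟨?_, ?_⟩, ?_⟩, ?_⟩
      · simpa using (Set.mem_Icc.1 ha).1
      · simpa using (Set.mem_Icc.1 ha).2
      · simpa [Fin.cons_succ] using hσ
      · simp [Fin.cons_succ]
  have hinj : Set.InjOn (fun π : Fin (m'+1) → ℕ => (π 0, fun k : Fin m' => π k.succ))
      {π : Fin (m'+1) → ℕ | (1 ≤ π 0 ∧ π 0 ≤ n - m') ∧ IsPF m' n (fun k => π k.succ)} := by
    intro π hπ ρ hρ hq
    have h1 : π 0 = ρ 0 := congrArg Prod.fst hq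
    have h2 : (fun k : Fin m' => π k.succ) = fun k : Fin m' => ρ k.succ :=
      congrArg Prod.snd hq
    funext k
    induction k using Fin.cases with
    | zero => exact h1
    | succ j => exact congrFun h2 j
  rw [← Set.ncard_image_of_injOn hinj, himg]
  rw [← Nat.card_coe_set_eq, Nat.card_congr (Equiv.Set.prod _ _), Nat.card_prod,
    Nat.card_coe_set_eq, Nat.card_coe_set_eq]
  rw [ncard_PF m' n hm' (by omega)]
  have hIcc : (Set.Icc 1 (n - m')).ncard = n - m' := by
    rw [← Finset.coe_Icc, Set.ncard_coe_finset, Nat.card_Icc]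
    omega
  rw [hIcc]
  have e1 : n - (m'+1) + 1 = n - m' := he0
  have e2 : n - (m'+1) + 2 = n + 1 - m' := by omega
  have e3 : m' + 1 - 2 = m' - 1 := by omega
  rw [e1, e2, e3]
  ring
end

section
/- The generating function of the level-set statistic satisfies: sum over π ∈ PF(m,n) of x^{slev(π)} = (n-m+1) x ((n-m+1)x + m)^{m-1}. -/
open Finset

/-- The finite set of parking functions `PF(m,n)`, encoded as functions
`Fin m → Fin n`, where the preferred spot of car `k` is `(π k : ℕ) + 1 ∈ {1,…,n}`. -/
def pf (m n : ℕ) : Finset (Fin m → Fin n) :=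
  Finset.univ.filter (fun π =>
    ∀ i, i ≤ n → m + i ≤ (Finset.univ.filter (fun k => (π k : ℕ) + 1 ≤ i)).card + n)

lemma mem_pf {m n : ℕ} {π : Fin m → Fin n} :
    π ∈ pf m n ↔ ∀ i, i ≤ n →
      m + i ≤ (univ.filter (fun k => (π k : ℕ) + 1 ≤ i)).card + n := by
  simp [pf]

lemma count_split {m t : ℕ} (A : Finset (Fin m)) (π : Fin m → Fin (m + t))
    (e2 : Fin (m - A.card) ≃o ↥(Aᶜ)) (g : Fin (m - A.card) → Fin (m - 1))
    (hsmall : ∀ i ∈ A, (π i : ℕ) + 1 ≤ t + 1)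
    (hbig : ∀ u, (π (e2 u) : ℕ) = t + 1 + (g u : ℕ)) (j : ℕ) :
    (univ.filter fun l => (π l : ℕ) + 1 ≤ t + 1 + j).card
      = A.card + (univ.filter fun u => (g u : ℕ) + 1 ≤ j).card := by
  classical
  have hP : ∀ u, ((π (e2 u) : ℕ) + 1 ≤ t + 1 + j ↔ (g u : ℕ) + 1 ≤ j) := by
    intro u; rw [hbig u]; omega
  have hsplit : (univ.filter fun l => (π l : ℕ) + 1 ≤ t + 1 + j)
      = A.filter (fun l => (π l : ℕ) + 1 ≤ t + 1 + j)
        ∪ Aᶜ.filter (fun l => (π l : ℕ) + 1 ≤ t + 1 + j) := by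
    rw [← filter_union, union_compl]
  rw [hsplit, card_union_of_disjoint (disjoint_filter_filter disjoint_compl_right)]
  congr 1
  · rw [filter_true_of_mem]; intro i hi; have := hsmall i hi; omega
  · symm
    apply card_bij (fun u _ => (e2 u : Fin m))
    · intro u hu
      simp only [mem_filter, mem_univ, true_and] at hu ⊢
      exact ⟨(e2 u).2, (hP u).2 hu⟩
    · intro u _ v _ h
      exact e2.injective (Subtype.ext h)
    · intro l hl
      simp only [mem_filter] at hl
      refine ⟨e2.symm ⟨l, hl.1⟩, ?_, by simp⟩
      simp only [mem_filter, mem_univ, true_and]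
      have h2 := hP (e2.symm ⟨l, hl.1⟩)
      rw [OrderIso.apply_symm_apply] at h2
      exact h2.1 hl.2

lemma mem_pf_big {m t : ℕ} (hm : 1 ≤ m) (A : Finset (Fin m))
    (e2 : Fin (m - A.card) ≃o ↥(Aᶜ)) (π : Fin m → Fin (m + t))
    (hmem : ∀ i : Fin m, ((π i : ℕ) + 1 ≤ t + 1 ↔ i ∈ A))
    (g : Fin (m - A.card) → Fin (m - 1))
    (hbig : ∀ u, (π (e2 u) : ℕ) = t + 1 + (g u : ℕ)) :
    π ∈ pf m (m + t) ↔ g ∈ pf (m - A.card) (m - 1) := by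
  have hkm : A.card ≤ m := by simpa using A.card_le_univ
  have hsmall : ∀ i ∈ A, (π i : ℕ) + 1 ≤ t + 1 := fun i hi => (hmem i).2 hi
  rw [mem_pf, mem_pf]
  constructor
  · intro hpf j hj
    have h1 := hpf (t + 1 + j) (by omega)
    rw [count_split A π e2 g hsmall hbig j] at h1
    omega
  · intro hg i hi
    rcases le_or_gt i t with h | h
    · omega
    · obtain ⟨j, rfl⟩ : ∃ j, i = t + 1 + j := ⟨i - (t + 1), by omega⟩
      have h1 := hg j (by omega)
      rw [count_split A π e2 g hsmall hbig j]
      omega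

def toPair {m t : ℕ} (A : Finset (Fin m)) (hA : 1 ≤ A.card)
    (e2 : Fin (m - A.card) ≃o ↥(Aᶜ)) (π : Fin m → Fin (m + t)) :
    (↥A → Fin (t + 1)) × (Fin (m - A.card) → Fin (m - 1)) :=
  (fun a => ⟨min (π a : ℕ) t, Nat.lt_succ_of_le (Nat.min_le_right _ _)⟩,
   fun u => ⟨min ((π (e2 u) : ℕ) - (t + 1)) (m - 2), by
      have h1 := u.pos
      have h2 := Nat.min_le_right ((π (e2 u) : ℕ) - (t + 1)) (m - 2)
      omega⟩)

def toFun {m t : ℕ} (hm : 1 ≤ m) (A : Finset (Fin m))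
    (e2 : Fin (m - A.card) ≃o ↥(Aᶜ))
    (p : (↥A → Fin (t + 1)) × (Fin (m - A.card) → Fin (m - 1))) :
    Fin m → Fin (m + t) :=
  fun i => if h : i ∈ A then
    ⟨(p.1 ⟨i, h⟩ : ℕ), by have := (p.1 ⟨i, h⟩).isLt; omega⟩
  else
    ⟨t + 1 + (p.2 (e2.symm ⟨i, by simpa using h⟩) : ℕ), by
      have := (p.2 (e2.symm ⟨i, by simpa using h⟩)).isLt; omega⟩

lemma toPair_fst {m t : ℕ} (A : Finset (Fin m)) (hA : 1 ≤ A.card)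
    (e2 : Fin (m - A.card) ≃o ↥(Aᶜ)) (π : Fin m → Fin (m + t))
    (a : ↥A) (ha : (π a : ℕ) ≤ t) :
    (((toPair A hA e2 π).1 a : ℕ)) = (π a : ℕ) := by
  simp only [toPair, Fin.val_mk]
  omega

lemma toPair_snd {m t : ℕ} (A : Finset (Fin m)) (hA : 1 ≤ A.card)
    (e2 : Fin (m - A.card) ≃o ↥(Aᶜ)) (π : Fin m → Fin (m + t))
    (u : Fin (m - A.card)) (hu : t + 1 ≤ (π (e2 u) : ℕ)) :
    (((toPair A hA e2 π).2 u : ℕ)) = (π (e2 u) : ℕ) - (t + 1) := by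
  simp only [toPair, Fin.val_mk]
  have := (π (e2 u)).isLt
  have h1 := u.pos
  omega

lemma toFun_small {m t : ℕ} (hm : 1 ≤ m) (A : Finset (Fin m))
    (e2 : Fin (m - A.card) ≃o ↥(Aᶜ))
    (p : (↥A → Fin (t + 1)) × (Fin (m - A.card) → Fin (m - 1)))
    (i : Fin m) (h : i ∈ A) :
    ((toFun hm A e2 p i : ℕ)) = (p.1 ⟨i, h⟩ : ℕ) := by
  simp only [toFun, dif_pos h]

lemma toFun_notmem {m t : ℕ} (hm : 1 ≤ m) (A : Finset (Fin m))
    (e2 : Fin (m - A.card) ≃o ↥(Aᶜ))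
    (p : (↥A → Fin (t + 1)) × (Fin (m - A.card) → Fin (m - 1)))
    (i : Fin m) (h : i ∉ A) :
    ((toFun hm A e2 p i : ℕ))
      = t + 1 + (p.2 (e2.symm ⟨i, by simpa using h⟩) : ℕ) := by
  simp only [toFun, dif_neg h]

lemma toFun_big {m t : ℕ} (hm : 1 ≤ m) (A : Finset (Fin m))
    (e2 : Fin (m - A.card) ≃o ↥(Aᶜ))
    (p : (↥A → Fin (t + 1)) × (Fin (m - A.card) → Fin (m - 1)))
    (u : Fin (m - A.card)) :
    ((toFun hm A e2 p (e2 u) : ℕ)) = t + 1 + (p.2 u : ℕ) := by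
  have hnot : (e2 u : Fin m) ∉ A := by
    have := (e2 u).2; simp only [Finset.mem_compl] at this; exact this
  rw [toFun_notmem hm A e2 p _ hnot]
  congr 2
  have h1 : (⟨(e2 u : Fin m), by simpa using hnot⟩ : ↥(Aᶜ)) = e2 u :=
    Subtype.ext rfl
  rw [h1, OrderIso.symm_apply_apply]

lemma toFun_mem {m t : ℕ} (hm : 1 ≤ m) (A : Finset (Fin m))
    (e2 : Fin (m - A.card) ≃o ↥(Aᶜ))
    (p : (↥A → Fin (t + 1)) × (Fin (m - A.card) → Fin (m - 1)))
    (i : Fin m) :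
    ((toFun hm A e2 p i : ℕ) + 1 ≤ t + 1 ↔ i ∈ A) := by
  by_cases h : i ∈ A
  · rw [toFun_small hm A e2 p i h]
    have := (p.1 ⟨i, h⟩).isLt
    simp only [h, iff_true]
    omega
  · rw [toFun_notmem hm A e2 p i h]
    simp only [h, iff_false]
    omega

lemma fiber_card (m t : ℕ) (hm : 1 ≤ m) (A : Finset (Fin m)) (hA : A.Nonempty) :
    ((pf m (m + t)).filter
      (fun π => univ.filter (fun i => (π i : ℕ) + 1 ≤ t + 1) = A)).card
    = (t + 1) ^ A.card * (pf (m - A.card) (m - 1)).card := by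
  classical
  have hAc : 1 ≤ A.card := hA.card_pos
  have hkm : A.card ≤ m := by simpa using A.card_le_univ
  have hcc : (Aᶜ : Finset (Fin m)).card = m - A.card := by rw [card_compl]; simp
  set e2 : Fin (m - A.card) ≃o ↥(Aᶜ) := (Aᶜ).orderIsoOfFin hcc with he2
  have key : (t + 1) ^ A.card * (pf (m - A.card) (m - 1)).card
      = ((univ : Finset (↥A → Fin (t + 1))) ×ˢ pf (m - A.card) (m - 1)).card := by
    rw [card_product, card_univ, Fintype.card_fun]
    simp [Fintype.card_coe]
  rw [key]
  have memchar : ∀ π ∈ (pf m (m + t)).filter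
      (fun π => univ.filter (fun i => (π i : ℕ) + 1 ≤ t + 1) = A),
      ∀ i : Fin m, ((π i : ℕ) + 1 ≤ t + 1 ↔ i ∈ A) := by
    intro π hπ i
    simp only [mem_filter] at hπ
    conv_rhs => rw [← hπ.2]
    simp
  refine card_nbij' (toPair A hAc e2) (toFun hm A e2) ?_ ?_ ?_ ?_
  · -- forward maps into product
    intro π hπ
    have hmem := memchar π hπ
    simp only [mem_coe, mem_filter] at hπ
    have hbigv : ∀ u : Fin (m - A.card), t + 1 ≤ (π (e2 u) : ℕ) := by
      intro u
      have h1 : ((e2 u : Fin m)) ∉ A := by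
        have := (e2 u).2; simp only [Finset.mem_compl] at this; exact this
      have h2 : ¬ ((π (e2 u) : ℕ) + 1 ≤ t + 1) := fun hc => h1 ((hmem _).1 hc)
      omega
    simp only [mem_coe, mem_product, mem_univ, true_and]
    refine (mem_pf_big hm A e2 π hmem _ ?_).mp hπ.1
    intro u
    rw [toPair_snd A hAc e2 π u (hbigv u)]
    have := hbigv u
    omega
  · -- backward maps into fiber
    intro p hp
    simp only [mem_coe, mem_product, mem_univ, true_and] at hp
    have hmem := toFun_mem hm A e2 p
    simp only [mem_coe, mem_filter]
    constructor
    · exact (mem_pf_big hm A e2 _ hmem p.2 (toFun_big hm A e2 p)).mpr hp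
    · ext i
      simp only [mem_filter, mem_univ, true_and]
      exact hmem i
  · -- left inverse
    intro π hπ
    have hmem := memchar π hπ
    funext i
    apply Fin.ext
    by_cases h : i ∈ A
    · rw [toFun_small hm A e2 _ i h]
      exact toPair_fst A hAc e2 π ⟨i, h⟩ (by
        show (π i : ℕ) ≤ t
        have := (hmem i).2 h
        omega)
    · rw [toFun_notmem hm A e2 _ i h]
      have hco : ((e2 (e2.symm ⟨i, by simpa using h⟩) : Fin m)) = i := by
        rw [OrderIso.apply_symm_apply]
      have h2 : ¬ ((π i : ℕ) + 1 ≤ t + 1) := fun hc => h ((hmem i).1 hc)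
      rw [toPair_snd A hAc e2 π _ (by rw [hco]; omega)]
      rw [hco]
      have h3 := (π i).isLt
      omega
  · -- right inverse
    intro p hp
    have hmem := toFun_mem hm A e2 p
    refine Prod.ext ?_ ?_
    · funext a
      apply Fin.ext
      have h1 := toFun_small hm A e2 p a a.2
      have h2 := (p.1 a).isLt
      simp only [Subtype.coe_eta] at h1
      rw [toPair_fst A hAc e2 _ a (by omega)]
      omega
    · funext u
      apply Fin.ext
      have h1 := toFun_big hm A e2 p u
      have h2 := (p.2 u).isLt
      rw [toPair_snd A hAc e2 _ u (by omega)]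
      omega

lemma fiber_empty (m t : ℕ) (hm : 1 ≤ m) :
    ((pf m (m + t)).filter
      (fun π => univ.filter (fun i => (π i : ℕ) + 1 ≤ t + 1) = (∅ : Finset (Fin m)))) = ∅ := by
  rw [eq_empty_iff_forall_notMem]
  intro π hπ
  simp only [mem_filter] at hπ
  obtain ⟨hpf, hsm⟩ := hπ
  have h1 := mem_pf.mp hpf (t + 1) (by omega)
  rw [hsm] at h1
  simp only [card_empty] at h1
  omega

lemma pf_none (m : ℕ) (hm : 1 ≤ m) : pf m (m - 1) = ∅ := by
  rw [eq_empty_iff_forall_notMem]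
  intro π hπ
  have h1 := mem_pf.mp hπ 0 (by omega)
  have h2 : (univ.filter (fun k : Fin m => (π k : ℕ) + 1 ≤ 0)) = ∅ := by
    rw [filter_eq_empty_iff]; intro k _; omega
  rw [h2] at h1
  simp only [card_empty] at h1
  omega

lemma pf_zero (b : ℕ) : (pf 0 b).card = 1 := by
  have h : pf 0 b = univ := by
    rw [eq_univ_iff_forall]
    intro π
    rw [mem_pf]
    intro i hi
    omega
  rw [h, card_univ]
  simp

lemma fiber_card' (m t : ℕ) (hm : 1 ≤ m) (A : Finset (Fin m)) :
    ((pf m (m + t)).filter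
      (fun π => univ.filter (fun i => (π i : ℕ) + 1 ≤ t + 1) = A)).card
    = (t + 1) ^ A.card * (pf (m - A.card) (m - 1)).card := by
  rcases A.eq_empty_or_nonempty with rfl | hA
  · rw [fiber_empty m t hm]
    simp [pf_none m hm]
  · exact fiber_card m t hm A hA

lemma main_lemma : ∀ m, 1 ≤ m → ∀ t : ℕ, ∀ x : ℚ,
    (∑ π ∈ pf m (m + t), x ^ (univ.filter (fun i => (π i : ℕ) + 1 ≤ t + 1)).card)
      = ((t : ℚ) + 1) * x * (((t : ℚ) + 1) * x + m) ^ (m - 1) := by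
  intro m
  induction m using Nat.strong_induction_on with
  | _ m IH =>
  intro hm t x
  classical
  have hstep : (∑ π ∈ pf m (m + t),
        x ^ (univ.filter (fun i => (π i : ℕ) + 1 ≤ t + 1)).card)
      = ∑ A ∈ (univ : Finset (Fin m)).powerset,
          (((t : ℚ) + 1) ^ A.card * ((pf (m - A.card) (m - 1)).card : ℚ) * x ^ A.card) := by
    have hfib := sum_fiberwise_of_maps_to (s := pf m (m + t))
      (t := (univ : Finset (Fin m)).powerset)
      (g := fun π => univ.filter (fun i => (π i : ℕ) + 1 ≤ t + 1))
      (fun π _ => mem_powerset.mpr (subset_univ _))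
      (fun π => x ^ (univ.filter (fun i => (π i : ℕ) + 1 ≤ t + 1)).card)
    rw [← hfib]
    refine sum_congr rfl fun A _ => ?_
    have hc : ∀ π ∈ (pf m (m + t)).filter
        (fun π => univ.filter (fun i => (π i : ℕ) + 1 ≤ t + 1) = A),
        x ^ (univ.filter (fun i => (π i : ℕ) + 1 ≤ t + 1)).card = x ^ A.card := by
      intro π hπ
      rw [(mem_filter.mp hπ).2]
    rw [sum_congr rfl hc, sum_const, nsmul_eq_mul, fiber_card' m t hm A]
    push_cast
    ring
  rw [hstep]
  -- fiberwise by cardinality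
  have hstep2 : (∑ A ∈ (univ : Finset (Fin m)).powerset,
        (((t : ℚ) + 1) ^ A.card * ((pf (m - A.card) (m - 1)).card : ℚ) * x ^ A.card))
      = ∑ k ∈ Finset.range (m + 1), (m.choose k : ℚ) *
          (((t : ℚ) + 1) ^ k * ((pf (m - k) (m - 1)).card : ℚ) * x ^ k) := by
    have hfib := sum_fiberwise_of_maps_to (s := (univ : Finset (Fin m)).powerset)
      (t := Finset.range (m + 1)) (g := fun A => A.card)
      (fun A hA => mem_range.mpr (Nat.lt_succ_of_le (by
          simpa using card_le_card (mem_powerset.mp hA))))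
      (fun A => ((t : ℚ) + 1) ^ A.card * ((pf (m - A.card) (m - 1)).card : ℚ) * x ^ A.card)
    rw [← hfib]
    refine sum_congr rfl fun k _ => ?_
    have hc : ∀ A ∈ (univ : Finset (Fin m)).powerset.filter (fun A => A.card = k),
        ((t : ℚ) + 1) ^ A.card * ((pf (m - A.card) (m - 1)).card : ℚ) * x ^ A.card
          = ((t : ℚ) + 1) ^ k * ((pf (m - k) (m - 1)).card : ℚ) * x ^ k := by
      intro A hA
      rw [(mem_filter.mp hA).2]
    rw [sum_congr rfl hc, sum_const, nsmul_eq_mul]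
    congr 2
    rw [← powersetCard_eq_filter, card_powersetCard, card_univ, Fintype.card_fin]
  rw [hstep2]
  -- values of the inner cardinalities
  have hN : ∀ k, 1 ≤ k → k + 1 ≤ m →
      ((pf (m - k) (m - 1)).card : ℚ) = (k : ℚ) * (m : ℚ) ^ (m - k - 1) := by
    intro k hk1 hk2
    have hIH := IH (m - k) (by omega) (by omega) (k - 1) 1
    rw [show (m - k) + (k - 1) = m - 1 from by omega] at hIH
    simp only [one_pow] at hIH
    rw [sum_const, nsmul_eq_mul, mul_one] at hIH
    rw [hIH]
    rw [show (m - k) - 1 = m - k - 1 from rfl]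
    have h1 : ((k - 1 : ℕ) : ℚ) = (k : ℚ) - 1 := by
      push_cast [Nat.cast_sub hk1]; ring
    have h2 : ((m - k : ℕ) : ℚ) = (m : ℚ) - (k : ℚ) := by
      push_cast [Nat.cast_sub (by omega : k ≤ m)]; ring
    rw [h1, h2]
    ring_nf
  -- now the binomial algebra
  rw [Finset.sum_range_succ']
  have hzero : (m.choose 0 : ℚ) *
      (((t : ℚ) + 1) ^ 0 * ((pf (m - 0) (m - 1)).card : ℚ) * x ^ 0) = 0 := by
    rw [show m - 0 = m from rfl, pf_none m hm]
    simp
  rw [hzero, add_zero]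
  rw [add_pow, show m - 1 + 1 = m from by omega, Finset.mul_sum]
  refine sum_congr rfl fun j hj => ?_
  have hjm : j < m := mem_range.mp hj
  by_cases hcase : j + 1 = m
  · -- top term
    rw [show m - (j + 1) = 0 from by omega, pf_zero]
    obtain ⟨s, rfl⟩ : ∃ s, m = s + 1 := ⟨m - 1, by omega⟩
    have hjs : j = s := by omega
    subst hjs
    simp only [Nat.add_sub_cancel, Nat.sub_self, Nat.choose_self, Nat.cast_one,
      pow_zero, mul_one, one_mul]
    rw [mul_pow]
    ring
  · -- middle terms
    have h1 : 1 ≤ j + 1 := by omega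
    have h2 : (j + 1) + 1 ≤ m := by omega
    rw [hN (j + 1) h1 h2]
    have hID : ((m.choose (j + 1) : ℚ)) * ((j + 1 : ℕ) : ℚ)
        = (m : ℚ) * (((m - 1).choose j : ℚ)) := by
      have h3 := Nat.add_one_mul_choose_eq (m - 1) j
      rw [show m - 1 + 1 = m from by omega] at h3
      exact_mod_cast h3.symm
    rw [show m - (j + 1) - 1 = m - j - 2 from by omega]
    rw [show m - 1 - j = (m - j - 2) + 1 from by omega, pow_succ, mul_pow]
    push_cast at hID ⊢
    linear_combination (((t : ℚ) + 1) ^ (j + 1) * (m : ℚ) ^ (m - j - 2) * x ^ (j + 1)) * hID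

theorem gf_slev (m n : ℕ) (hm : 1 ≤ m) (hmn : m ≤ n) (x : ℚ) :
    ∑ π ∈ pf m n, x ^ (Finset.univ.filter (fun i => (π i : ℕ) + 1 ≤ n - m + 1)).card =
      ((n : ℚ) - m + 1) * x * (((n : ℚ) - m + 1) * x + m) ^ (m - 1) := by
  obtain ⟨t, rfl⟩ : ∃ t, n = m + t := ⟨n - m, by omega⟩
  have hc : ((m + t : ℕ) : ℚ) - (m : ℚ) + 1 = (t : ℚ) + 1 := by
    push_cast; ring
  rw [hc]
  simp only [show m + t - m = t from by omega]
  exact main_lemma m hm t x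
end
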